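/- Let K be a number field of degree d and let j be a positive integer with j > ρ_∞(K)·d / log 2. Let K_j be the finite extension of K generated by the j-th roots of all units of O_K. Then every nonzero proper principal ideal 𝔄 ⊊ O_K is strictly large in K_j: there exists x ∈ O_{K_j} with 𝔄 O_{K_j} = x O_{K_j} and |τ(x)| > 1 for every embedding τ : K_j → ℂ. -/

import Mathlib

open NumberField Polynomial

/-- The logarithmic embedding of a unit: the coordinate at an infinite place `w`
is `mult w * log (w x)` (i.e. `log|σ(x)|` at real places, `2 log|σ(x)|` at complex places). -/
noncomputable def logEmb (K : Type) [Field K] [NumberField K] (u : (𝓞 K)ˣ) :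
    NumberField.InfinitePlace K → ℝ :=
  fun w => (w.mult : ℝ) * Real.log (w ((u : 𝓞 K) : K))

/-- The covering radius `ρ_∞(K)` of the lattice of units with respect to the sup norm. -/
noncomputable def rhoInf (K : Type) [Field K] [NumberField K] : ℝ :=
  ⨆ v : {v : NumberField.InfinitePlace K → ℝ // ∑ w, v w = 0},
    ⨅ u : (𝓞 K)ˣ, ‖(v : NumberField.InfinitePlace K → ℝ) - logEmb K u‖

section Aux

open NumberField.InfinitePlace NumberField.Units

variable (K : Type) [Field K] [NumberField K]

lemma sum_mult_log (x : K) (hx : x ≠ 0) :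
    ∑ w : NumberField.InfinitePlace K, (w.mult : ℝ) * Real.log (w x)
      = Real.log (|Algebra.norm ℚ x| : ℚ) := by
  have h := congr_arg Real.log (prod_eq_abs_norm x)
  rw [Real.log_prod (fun w _ => pow_ne_zero _ (by simpa using hx))] at h
  simpa [Real.log_pow] using h

lemma logEmb_apply (u : (𝓞 K)ˣ) (w : NumberField.InfinitePlace K) :
    logEmb K u w = (w.mult : ℝ) * Real.log (w ((u : 𝓞 K) : K)) := rfl

lemma sum_logEmb (u : (𝓞 K)ˣ) : ∑ w, logEmb K u w = 0 := by
  have := sum_mult_log K ((u : 𝓞 K) : K) (Units.coe_ne_zero u)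
  rw [NumberField.Units.norm] at this
  simpa [logEmb] using this

lemma logEmb_mul (u v : (𝓞 K)ˣ) :
    logEmb K (u * v) = logEmb K u + logEmb K v := by
  funext w
  have hu : w ((u : 𝓞 K) : K) ≠ 0 := by simpa using Units.coe_ne_zero u
  have hv : w ((v : 𝓞 K) : K) ≠ 0 := by simpa using Units.coe_ne_zero v
  have : (((u * v : (𝓞 K)ˣ) : 𝓞 K) : K) = ((u : 𝓞 K) : K) * ((v : 𝓞 K) : K) := by
    push_cast; ring
  simp only [logEmb, Pi.add_apply, this, map_mul, Real.log_mul hu hv, mul_add]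

/-- `logEmb` as an additive group hom. -/
noncomputable def logEmbHom : Additive (𝓞 K)ˣ →+ (NumberField.InfinitePlace K → ℝ) where
  toFun x := logEmb K x.toMul
  map_zero' := by funext w; simp [logEmb]
  map_add' u v := logEmb_mul K u.toMul v.toMul

lemma logEmb_zpow (u : (𝓞 K)ˣ) (n : ℤ) :
    logEmb K (u ^ n) = (n : ℝ) • logEmb K u := by
  have h : logEmb K (u ^ n) = logEmbHom K (Additive.ofMul (u ^ n)) := rfl
  rw [h, ofMul_zpow, map_zsmul]
  ext w
  simp [logEmbHom, logEmb]

lemma logEmb_prod {ι : Type*} (t : Finset ι) (g : ι → (𝓞 K)ˣ) :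
    logEmb K (∏ i ∈ t, g i) = ∑ i ∈ t, logEmb K (g i) := by
  classical
  induction t using Finset.cons_induction with
  | empty =>
      funext w; simp [logEmb]
  | cons a s ha ih =>
      rw [Finset.prod_cons, Finset.sum_cons, logEmb_mul, ih]

/-- The key finiteness: the unit "lattice" covers the trace-zero hyperplane up to a
uniform bound. -/
lemma exists_covering : ∃ C : ℝ, ∀ v : NumberField.InfinitePlace K → ℝ,
    (∑ w, v w = 0) → ∃ u : (𝓞 K)ˣ, ‖v - logEmb K u‖ ≤ C := by
  classical
  set w₀ := NumberField.Units.dirichletUnitTheorem.w₀ (K := K)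
  set E := NumberField.InfinitePlace K → ℝ
  set S : Set E := Set.range (logEmb K) with hS
  -- every trace-zero vector is in the real span of S
  have hmem : ∀ v : E, (∑ w, v w = 0) → v ∈ Submodule.span ℝ S := by
    intro v hv
    set π : E →ₗ[ℝ] ({w : NumberField.InfinitePlace K // w ≠ w₀} → ℝ) :=
      LinearMap.funLeft ℝ ℝ Subtype.val with hπ
    have hπS : π '' S = (NumberField.Units.unitLattice K :
        Set ({w : NumberField.InfinitePlace K // w ≠ w₀} → ℝ)) := by
      ext x
      constructor
      · rintro ⟨-, ⟨u, rfl⟩, rfl⟩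
        exact ⟨Additive.ofMul u, trivial, rfl⟩
      · rintro ⟨u, -, rfl⟩
        exact ⟨logEmb K u.toMul, ⟨u.toMul, rfl⟩, rfl⟩
    have hmap : Submodule.map π (Submodule.span ℝ S) = ⊤ := by
      rw [Submodule.map_span, hπS,
        NumberField.Units.dirichletUnitTheorem.unitLattice_span_eq_top]
    have hv' : π v ∈ Submodule.map π (Submodule.span ℝ S) := by
      rw [hmap]; trivial
    obtain ⟨x, hx, hπx⟩ := hv'
    -- x has trace zero since S consists of trace-zero vectors
    have hS0 : ∀ y ∈ S, ∑ w, y w = 0 := by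
      rintro - ⟨u, rfl⟩; exact sum_logEmb K u
    have hxsum : ∑ w, x w = 0 := by
      let Lsum : E →ₗ[ℝ] ℝ := ∑ w, LinearMap.proj w
      have hLsum : ∀ y : E, Lsum y = ∑ w, y w := by
        intro y
        simp only [Lsum, LinearMap.sum_apply]
        exact Finset.sum_congr rfl (fun c _ => rfl)
      have : Submodule.span ℝ S ≤ LinearMap.ker Lsum := by
        rw [Submodule.span_le]
        intro y hy
        simp only [SetLike.mem_coe, LinearMap.mem_ker, hLsum]
        exact hS0 y hy
      have := this hx
      rwa [LinearMap.mem_ker, hLsum] at this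
    -- v = x
    have hvx : v = x := by
      have hdiff : ∀ w : NumberField.InfinitePlace K, w ≠ w₀ → v w - x w = 0 := by
        intro w hw
        have h2 : x w = v w := by
          exact
            congrFun hπx (⟨w, hw⟩ : {w : NumberField.InfinitePlace K // w ≠ w₀})
        rw [h2, sub_self]
      funext w
      by_cases hw : w = w₀
      · have hsum : ∑ w', (v w' - x w') = 0 := by
          rw [Finset.sum_sub_distrib, hv, hxsum, sub_zero]
        have hsingle : ∑ w', (v w' - x w') = v w - x w := by
          rw [Finset.sum_eq_single w]
          · intro b _ hb
            exact hdiff b (fun h => hb (h.trans hw.symm))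
          · intro h; exact absurd (Finset.mem_univ w) h
        rw [hsingle] at hsum
        linarith [hsum]
      · have := hdiff w hw
        linarith [this]
    rw [hvx]; exact hx
  -- get a finite spanning subset of S
  obtain ⟨s, hsS, hs_eq, hli⟩ := exists_linearIndependent ℝ S
  have hsfin : s.Finite := hli.setFinite
  set t : Finset E := hsfin.toFinset with ht
  -- choose units realizing elements of s
  have hchoice : ∀ i ∈ s, ∃ u : (𝓞 K)ˣ, logEmb K u = i := fun i hi => hsS hi
  choose! g hg using hchoice
  refine ⟨∑ i ∈ t, (1 / 2) * ‖i‖, ?_⟩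
  intro v hv
  have hvW : v ∈ Submodule.span ℝ s := by
    rw [hs_eq]; exact hmem v hv
  rw [Submodule.mem_span_set] at hvW
  obtain ⟨c, hsupp, hsum⟩ := hvW
  have hsupp' : c.support ⊆ t := fun i hi => hsfin.mem_toFinset.mpr (hsupp hi)
  have hrepr : v = ∑ i ∈ t, c i • i := by
    rw [← hsum]
    exact Finsupp.sum_of_support_subset c hsupp' (fun i r => r • i) (fun i _ => zero_smul ℝ i)
  refine ⟨∏ i ∈ t, g i ^ (round (c i) : ℤ), ?_⟩
  have hlog : logEmb K (∏ i ∈ t, g i ^ (round (c i) : ℤ))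
      = ∑ i ∈ t, ((round (c i) : ℝ)) • i := by
    rw [logEmb_prod]
    refine Finset.sum_congr rfl ?_
    intro i hi
    rw [logEmb_zpow, hg i (hsfin.mem_toFinset.mp hi)]
  have hdiff : v - logEmb K (∏ i ∈ t, g i ^ (round (c i) : ℤ))
      = ∑ i ∈ t, (c i - (round (c i) : ℝ)) • i := by
    rw [hrepr, hlog, ← Finset.sum_sub_distrib]
    refine Finset.sum_congr rfl (fun i _ => ?_)
    rw [sub_smul]
  rw [hdiff]
  calc ‖∑ i ∈ t, (c i - (round (c i) : ℝ)) • i‖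
      ≤ ∑ i ∈ t, ‖(c i - (round (c i) : ℝ)) • i‖ := norm_sum_le _ _
    _ = ∑ i ∈ t, |c i - (round (c i) : ℝ)| * ‖i‖ := by
        simp [norm_smul, Real.norm_eq_abs]
    _ ≤ ∑ i ∈ t, (1 / 2) * ‖i‖ :=
        Finset.sum_le_sum fun i _ =>
          mul_le_mul_of_nonneg_right (abs_sub_round _) (norm_nonneg _)

end Aux

set_option maxHeartbeats 2000000

/-- Let `j > ρ_∞(K)·[K:ℚ]/log 2` be a positive integer and let `L = K_j` be the extension
of `K` obtained by adjoining all `j`-th roots of every unit of `𝓞 K` (i.e. every polynomial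
`X^j - u`, `u ∈ 𝓞_K^×`, splits in `L`, and `L` is generated over `K` by these roots).
Then every nonzero proper principal ideal `𝔄 ⊊ 𝓞 K` is strictly large in `K_j`. -/
theorem strictly_large_in_Kj (K : Type) [Field K] [NumberField K]
    (j : ℕ) (hj0 : 0 < j)
    (hj : rhoInf K * (Module.finrank ℚ K : ℝ) / Real.log 2 < (j : ℝ))
    (L : Type) [Field L] [NumberField L] [Algebra K L]
    (hsplit : ∀ u : (𝓞 K)ˣ,
      Polynomial.Splits ((X ^ j - C ((u : 𝓞 K) : K)).map (algebraMap K L)))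
    (hgen : IntermediateField.adjoin K
      {y : L | ∃ u : (𝓞 K)ˣ, y ^ j = algebraMap K L ((u : 𝓞 K) : K)} = ⊤)
    (A : Ideal (𝓞 K)) (hA : A ≠ ⊥) (hA' : A ≠ ⊤) (hP : Submodule.IsPrincipal A) :
    ∃ x : 𝓞 L, Ideal.map (algebraMap (𝓞 K) (𝓞 L)) A = Ideal.span {x} ∧
      ∀ τ : L →+* ℂ, 1 < ‖τ (x : L)‖ := by
  classical
  obtain ⟨a, hAa⟩ := hP.1
  have ha0 : a ≠ 0 := by
    intro h
    exact hA (by rw [hAa, h]; simp)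
  have haU : ¬ IsUnit a := by
    intro h
    exact hA' (by rw [hAa, Ideal.submodule_span_eq]; exact Ideal.span_singleton_eq_top.mpr h)
  -- norm bound
  set N : ℕ := Ideal.absNorm A with hNdef
  have hN0 : N ≠ 0 := by
    simp only [hNdef, ne_eq, Ideal.absNorm_eq_zero_iff]
    exact hA
  have hN1 : N ≠ 1 := by
    simp only [hNdef, ne_eq, Ideal.absNorm_eq_one_iff]
    exact hA'
  have hN2 : 2 ≤ N := by omega
  set aK : K := (a : K) with haKdef
  have haK0 : aK ≠ 0 := by
    simp only [haKdef, ne_eq]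
    exact fun h => ha0 (RingOfIntegers.ext (by simpa using h))
  have habs : (|Algebra.norm ℚ aK| : ℚ) = (N : ℚ) := by
    have hNa : N = (Algebra.norm ℤ a).natAbs := by
      rw [hNdef, hAa, Ideal.submodule_span_eq, Ideal.absNorm_span_singleton]
    have h1 : Algebra.norm ℚ aK = ((Algebra.norm ℤ a : ℤ) : ℚ) :=
      (Algebra.coe_norm_int a).symm
    rw [h1, hNa, Nat.cast_natAbs]
    simp
  set d : ℝ := (Module.finrank ℚ K : ℝ) with hddef
  have hd0 : (0:ℝ) < d := by
    simp only [hddef]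
    exact_mod_cast Module.finrank_pos
  have hlog2 : (0:ℝ) < Real.log 2 := Real.log_pos one_lt_two
  set Lg : ℝ := Real.log (N : ℝ) with hLgdef
  have hLg : Real.log 2 ≤ Lg := by
    apply Real.log_le_log (by norm_num)
    exact_mod_cast hN2
  have hsum_a : ∑ w, ((w : NumberField.InfinitePlace K).mult : ℝ) * Real.log (w aK) = Lg := by
    rw [sum_mult_log K aK haK0, habs, hLgdef]
    norm_num
  set t : ℝ := Lg / d with htdef
  have ht : Real.log 2 / d ≤ t := by
    rw [htdef]
    gcongr
  have ht0 : (0:ℝ) < t := lt_of_lt_of_le (div_pos hlog2 hd0) ht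
  set v : NumberField.InfinitePlace K → ℝ :=
    fun w => (j:ℝ) * ((w.mult:ℝ) * t - (w.mult:ℝ) * Real.log (w aK)) with hvdef
  have hmultsum : ∑ w : NumberField.InfinitePlace K, ((w.mult : ℕ) : ℝ) = d := by
    rw [hddef, ← NumberField.InfinitePlace.sum_mult_eq]
    push_cast
    rfl
  have hvsum : ∑ w, v w = 0 := by
    have h1 : ∑ w, v w
        = (j:ℝ) * (t * (∑ w : NumberField.InfinitePlace K, ((w.mult : ℕ) : ℝ))
            - ∑ w, ((w : NumberField.InfinitePlace K).mult : ℝ) * Real.log (w aK)) := by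
      simp only [hvdef]
      rw [← Finset.mul_sum]
      congr 1
      rw [Finset.sum_sub_distrib, Finset.mul_sum]
      congr 1
      exact Finset.sum_congr rfl (fun w _ => by ring)
    rw [h1, hmultsum, hsum_a, htdef]
    rw [div_mul_cancel₀ Lg hd0.ne']
    ring
  -- covering bound
  obtain ⟨C₀, hC⟩ := exists_covering K
  have hbddB : ∀ v0 : NumberField.InfinitePlace K → ℝ,
      BddBelow (Set.range fun u : (𝓞 K)ˣ => ‖v0 - logEmb K u‖) :=
    fun v0 => ⟨0, by rintro - ⟨u, rfl⟩; exact norm_nonneg _⟩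
  have hbdd : BddAbove (Set.range fun p : {v : NumberField.InfinitePlace K → ℝ // ∑ w, v w = 0} =>
      ⨅ u : (𝓞 K)ˣ, ‖(p : NumberField.InfinitePlace K → ℝ) - logEmb K u‖) := by
    refine ⟨C₀, ?_⟩
    rintro - ⟨p, rfl⟩
    obtain ⟨u, hu⟩ := hC p.1 p.2
    exact le_trans (ciInf_le (hbddB p.1) u) hu
  have hle : (⨅ u : (𝓞 K)ˣ, ‖v - logEmb K u‖) ≤ rhoInf K :=
    le_ciSup hbdd (⟨v, hvsum⟩ : {v : NumberField.InfinitePlace K → ℝ // ∑ w, v w = 0})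
  have hjR : (0:ℝ) < j := by exact_mod_cast hj0
  have hρlt : rhoInf K < (j:ℝ) * t := by
    have h1 : rhoInf K * d < (j:ℝ) * Real.log 2 := by
      have := (div_lt_iff₀ hlog2).mp hj
      linarith [this]
    have h2 : rhoInf K < (j:ℝ) * Real.log 2 / d := by
      rw [lt_div_iff₀ hd0]
      exact h1
    refine lt_of_lt_of_le h2 ?_
    rw [mul_div_assoc]
    exact mul_le_mul_of_nonneg_left ht (le_of_lt hjR)
  obtain ⟨u, hu⟩ := exists_lt_of_ciInf_lt (lt_of_le_of_lt hle hρlt)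
  -- the element z = a^j * u has all places > 1
  set uK : K := ((u : 𝓞 K) : K) with huKdef
  have huK0 : uK ≠ 0 := NumberField.Units.coe_ne_zero u
  set zK : K := aK ^ j * uK with hzKdef
  have hzK0 : zK ≠ 0 := mul_ne_zero (pow_ne_zero _ haK0) huK0
  have key : ∀ w : NumberField.InfinitePlace K, 1 < w zK := by
    intro w
    have hwa : w aK ≠ 0 := (NumberField.InfinitePlace.pos_iff.mpr haK0).ne'
    have hwu : w uK ≠ 0 := (NumberField.InfinitePlace.pos_iff.mpr huK0).ne'
    have hlogz : Real.log (w zK) = (j:ℝ) * Real.log (w aK) + Real.log (w uK) := by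
      rw [hzKdef, map_mul, map_pow, Real.log_mul (pow_ne_zero _ hwa) hwu, Real.log_pow]
    have hcoord : |v w - logEmb K u w| < (j:ℝ)*t := by
      calc |v w - logEmb K u w| = ‖(v - logEmb K u) w‖ := by
            simp [Real.norm_eq_abs]
        _ ≤ ‖v - logEmb K u‖ := norm_le_pi_norm _ w
        _ < _ := hu
    have hlow : v w - (j:ℝ)*t < logEmb K u w := by
      have := (abs_lt.mp hcoord).2
      linarith
    have hM1 : (1:ℝ) ≤ (w.mult : ℝ) := NumberField.InfinitePlace.one_le_mult
    have hprod : 0 < (w.mult:ℝ) * Real.log (w zK) := by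
      have hv_w : v w = (j:ℝ) * ((w.mult:ℝ)*t - (w.mult:ℝ)*Real.log (w aK)) := rfl
      have hl : logEmb K u w = (w.mult : ℝ) * Real.log (w uK) := rfl
      rw [hv_w, hl] at hlow
      have hE : (w.mult:ℝ) * Real.log (w zK)
          = (j:ℝ) * ((w.mult:ℝ) * Real.log (w aK)) + (w.mult:ℝ) * Real.log (w uK) := by
        rw [hlogz]; ring
      rw [hE]
      nlinarith [hlow, hM1, ht0, hjR,
        mul_nonneg (mul_nonneg hjR.le ht0.le) (sub_nonneg.mpr hM1)]
    have hlogpos : 0 < Real.log (w zK) := by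
      by_contra h
      push_neg at h
      have hnp : (w.mult:ℝ) * Real.log (w zK) ≤ 0 :=
        mul_nonpos_iff.mpr (Or.inl ⟨by linarith, h⟩)
      linarith
    have hwz : 0 < w zK := NumberField.InfinitePlace.pos_iff.mpr hzK0
    calc (1:ℝ) = Real.exp 0 := Real.exp_zero.symm
      _ < Real.exp (Real.log (w zK)) := Real.exp_lt_exp.mpr hlogpos
      _ = w zK := Real.exp_log hwz
  -- construct the j-th root
  have hdeg : (X ^ j - C uK).degree ≠ 0 := by
    rw [Polynomial.degree_X_pow_sub_C hj0]
    simpa using hj0.ne'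
  obtain ⟨y, hy⟩ := (hsplit u).exists_eval_eq_zero (by rwa [Polynomial.degree_map])
  have hyj : y ^ j = algebraMap K L uK := by
    simp only [Polynomial.eval_map, Polynomial.eval₂_sub, Polynomial.eval₂_pow, Polynomial.eval₂_X,
      Polynomial.eval₂_C, sub_eq_zero] at hy
    exact hy
  set uO : 𝓞 K := (u : 𝓞 K) with huOdef
  set uL : 𝓞 L := algebraMap (𝓞 K) (𝓞 L) uO with huLdef
  have hcoeu : (uL : L) = algebraMap K L uK := by
    rw [RingOfIntegers.coe_eq_algebraMap, huLdef,
      ← IsScalarTower.algebraMap_apply (𝓞 K) (𝓞 L) L uO,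
      IsScalarTower.algebraMap_apply (𝓞 K) K L uO]
  have hyint : IsIntegral ℤ y := by
    refine IsIntegral.of_pow hj0 ?_
    rw [hyj, ← hcoeu]
    exact uL.2
  set yO : 𝓞 L := ⟨y, hyint⟩ with hyOdef
  have hyOco : (yO : L) = y := rfl
  have hyOj : yO ^ j = uL := by
    apply RingOfIntegers.ext
    calc ((yO ^ j : 𝓞 L) : L) = ((yO : L)) ^ j := by
          rw [RingOfIntegers.coe_eq_algebraMap, map_pow]
      _ = algebraMap K L uK := by rw [hyOco, hyj]
      _ = (uL : L) := hcoeu.symm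
  have huLunit : IsUnit uL := (Units.isUnit u).map (algebraMap (𝓞 K) (𝓞 L))
  have hyUnit : IsUnit yO := by
    have hmul : yO ^ (j - 1) * yO = uL := by
      rw [← pow_succ, Nat.sub_add_cancel hj0, hyOj]
    rw [← hmul] at huLunit
    exact isUnit_of_mul_isUnit_right huLunit
  set aL : 𝓞 L := algebraMap (𝓞 K) (𝓞 L) a with haLdef
  have hcoea : (aL : L) = algebraMap K L aK := by
    rw [RingOfIntegers.coe_eq_algebraMap, haLdef,
      ← IsScalarTower.algebraMap_apply (𝓞 K) (𝓞 L) L a,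
      IsScalarTower.algebraMap_apply (𝓞 K) K L a]
  refine ⟨aL * yO, ?_, ?_⟩
  · rw [hAa, Ideal.submodule_span_eq, Ideal.map_span, Set.image_singleton]
    exact Ideal.span_singleton_eq_span_singleton.mpr
      ⟨hyUnit.unit, by rw [IsUnit.unit_spec]⟩
  · intro τ
    set σ : K →+* ℂ := τ.comp (algebraMap K L) with hσdef
    have h1 : 1 < NumberField.InfinitePlace.mk σ zK := key _
    have hxpow : ((aL * yO : 𝓞 L) : L) ^ j = algebraMap K L zK := by
      have hmulco : ((aL * yO : 𝓞 L) : L) = (aL : L) * y := by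
        rw [RingOfIntegers.coe_eq_algebraMap, map_mul]; rfl
      rw [hmulco, mul_pow, hyj, hcoea, ← map_pow, ← map_mul, hzKdef]
    have h2 : ‖τ ((aL * yO : 𝓞 L) : L)‖ ^ j
        = NumberField.InfinitePlace.mk σ zK := by
      rw [NumberField.InfinitePlace.apply]
      calc ‖τ ((aL * yO : 𝓞 L) : L)‖ ^ j
          = ‖(τ ((aL * yO : 𝓞 L) : L)) ^ j‖ := (norm_pow _ j).symm
        _ = ‖τ (((aL * yO : 𝓞 L) : L) ^ j)‖ := by rw [map_pow τ]
        _ = ‖σ zK‖ := by rw [hxpow, hσdef]; rfl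
    by_contra hcon
    push_neg at hcon
    have hle1 : ‖τ ((aL * yO : 𝓞 L) : L)‖ ^ j ≤ 1 :=
      pow_le_one₀ (norm_nonneg _) hcon
    rw [h2] at hle1
    linarith
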